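/- (Single inserted mass point, generalized moments.) Let γ ∈ (0,1) and set α_n = γ/(1+nγ) for all n ≥ 0. Then for all nonnegative integers n, r, s with r > 0: μ_{n,r,s} = δ_{n+r,s} if s ≥ n+r; μ_{n,r,s} = -nγ²/((1+(r-1)γ)(1+sγ)) if n-1 < s < n+r; and μ_{n,r,s} = (1-γ)γ/((1+(r-1)γ)(1+sγ)) if 0 ≤ s ≤ n-1. -/

import Mathlib

open Polynomial LaurentPolynomial Finset

noncomputable section

/-- Extension of the Verblunsky coefficients to integer indices, with the
convention `α₋₁ = -1` (and junk value `-1` for all negative indices). -/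
def az (α : ℕ → ℂ) (k : ℤ) : ℂ := if 0 ≤ k then α k.toNat else -1

/-- The monic OPUC `Φ_n` defined by Szegő's recurrence
`Φ_{n+1}(z) = z·Φ_n(z) - conj(α_n)·Φ_n^*(z)`, where `Φ_n^*` is the reverse
polynomial `reflect n (map conj Φ_n)`. -/
def szego (α : ℕ → ℂ) : ℕ → Polynomial ℂ
  | 0 => 1
  | n + 1 =>
      Polynomial.X * szego α n -
        Polynomial.C ((starRingEnd ℂ) (α n)) *
          Polynomial.reflect n ((szego α n).map (starRingEnd ℂ))

/-- `f̄(1/z)` as a Laurent polynomial, for a polynomial `f`. -/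
def polyBarInv (f : Polynomial ℂ) : LaurentPolynomial ℂ :=
  f.sum fun k c => LaurentPolynomial.C ((starRingEnd ℂ) c) * LaurentPolynomial.T (-(k : ℤ))

/-- `f̄(1/z)` as a Laurent polynomial, for a Laurent polynomial `f`. -/
def laurentBarInv (f : LaurentPolynomial ℂ) : LaurentPolynomial ℂ :=
  Finsupp.sum f.coeff fun k c => LaurentPolynomial.C ((starRingEnd ℂ) c) * LaurentPolynomial.T (-k)

/-- The generalized moment `μ_{n,r,s} = ⟨Φ_s(z), z^n·Φ_r(z)⟩ / ⟨Φ_s(z), Φ_s(z)⟩`,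
where `⟨f,g⟩ = L(f(z)·ḡ(1/z))` and `⟨Φ_s, Φ_s⟩ = ∏_{j<s} (1 - |α_j|²)`. -/
def genMom (L : LaurentPolynomial ℂ →ₗ[ℂ] ℂ) (α : ℕ → ℂ) (n : ℤ) (r s : ℕ) : ℂ :=
  L (Polynomial.toLaurent (szego α s) *
      laurentBarInv (LaurentPolynomial.T n * Polynomial.toLaurent (szego α r))) /
    ∏ j ∈ Finset.range s, ((1 - Complex.normSq (α j) : ℝ) : ℂ)

/-- `IsLatticePath S p l q` : the list of steps `l`, starting at `p`, forms a lattice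
path from `p` to `q` lying weakly above the x-axis, each step `st` taken from a
position `x` satisfying the (possibly position-dependent) step condition `S x st`. -/
def IsLatticePath (S : ℤ × ℤ → ℤ × ℤ → Prop) : ℤ × ℤ → List (ℤ × ℤ) → ℤ × ℤ → Prop
  | p, [], q => p = q ∧ 0 ≤ p.2
  | p, st :: rest, q => 0 ≤ p.2 ∧ S p st ∧ IsLatticePath S (p + st) rest q

/-- The weight of a path: the product of the weights of its steps, where the weight
of a step may depend on its starting position. -/
def pathWeight (w : ℤ × ℤ → ℤ × ℤ → ℂ) : ℤ × ℤ → List (ℤ × ℤ) → ℂ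
  | _, [] => 1
  | p, st :: rest => w p st * pathWeight w (p + st) rest

/-- Łukasiewicz steps: `(1, k)` with `k ≤ 1`. -/
def lukaStep (_p st : ℤ × ℤ) : Prop := st.1 = 1 ∧ st.2 ≤ 1

/-- Łukasiewicz step weights: an up-step has weight `1`, and a step
`(a,b) → (a+1,b-k)` (`0 ≤ k ≤ b`) has weight
`-α_b·conj(α_{b-k-1})·∏_{j=b-k}^{b-1} (1-|α_j|²)`. -/
def wtLstep (α : ℕ → ℂ) (p st : ℤ × ℤ) : ℂ :=
  if st.2 = 1 then 1
  else
    -(az α p.2) * (starRingEnd ℂ) (az α (p.2 + st.2 - 1)) *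
      ∏ j ∈ Finset.Ico (p.2 + st.2) p.2, ((1 - Complex.normSq (az α j) : ℝ) : ℂ)

/-- Gentle Motzkin steps: `(1,1)` (only at even `a+b`), `(1,0)`, `(1,-1)` (only at odd `a+b`). -/
def gentleStep (p st : ℤ × ℤ) : Prop :=
  (st = (1, 1) ∧ Even (p.1 + p.2)) ∨ st = (1, 0) ∨ (st = (1, -1) ∧ Odd (p.1 + p.2))

/-- Gentle Motzkin step weights. -/
def wtMstep (α : ℕ → ℂ) (p st : ℤ × ℤ) : ℂ :=
  if st = (1, 1) then 1
  else if st = (1, -1) then ((1 - Complex.normSq (az α (p.2 - 1)) : ℝ) : ℂ)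
  else if Even (p.1 + p.2) then az α p.2
  else -(starRingEnd ℂ) (az α (p.2 - 1))

/-- Schröder steps: `(1,1)`, `(1,0)`, `(0,-1)`. -/
def schStep (_p st : ℤ × ℤ) : Prop := st = (1, 1) ∨ st = (1, 0) ∨ st = (0, -1)

/-- Schröder step weights. -/
def wtSstep (α : ℕ → ℂ) (p st : ℤ × ℤ) : ℂ :=
  if st = (1, 1) then 1
  else if st = (1, 0) then -((starRingEnd ℂ) (az α (p.2 - 1)) / (starRingEnd ℂ) (az α p.2))
  else
    ((starRingEnd ℂ) (az α (p.2 - 2)) / (starRingEnd ℂ) (az α (p.2 - 1))) *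
      ((1 - Complex.normSq (az α (p.2 - 1)) : ℝ) : ℂ)


lemma reflect_sum' (N m : ℕ) (f : ℕ → Polynomial ℂ) :
    reflect N (∑ k ∈ range m, f k) = ∑ k ∈ range m, reflect N (f k) := by
  induction m with
  | zero => simp
  | succ m ih => rw [sum_range_succ, reflect_add, ih, sum_range_succ]

lemma denom_pos {γ : ℝ} (hγ0 : 0 < γ) (j : ℕ) : (0:ℝ) < 1 + j * γ := by positivity

lemma szego_succ_eq (γ : ℝ) (hγ0 : 0 < γ) (α : ℕ → ℂ)
    (hα : α = fun n : ℕ => ((γ / (1 + n * γ) : ℝ) : ℂ)) (s : ℕ) :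
    szego α (s + 1) = X ^ (s + 1) - Polynomial.C (α s) * ∑ k ∈ range (s + 1), X ^ k := by
  have hconj : ∀ m : ℕ, (starRingEnd ℂ) (α m) = α m := by
    intro m; rw [hα]; exact Complex.conj_ofReal _
  induction s with
  | zero =>
    rw [show szego α 1 = X * szego α 0 -
      Polynomial.C ((starRingEnd ℂ) (α 0)) * reflect 0 ((szego α 0).map (starRingEnd ℂ)) from rfl]
    simp [szego, hconj 0]
  | succ s ih =>
    have hr : (γ / (1 + (s:ℝ) * γ)) * (1 - γ / (1 + ((s:ℝ)+1) * γ)) = γ / (1 + ((s:ℝ)+1) * γ) := by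
      have h1 : 1 + (s:ℝ) * γ ≠ 0 := ne_of_gt (denom_pos hγ0 s)
      have h2 : 1 + ((s:ℝ)+1) * γ ≠ 0 := by
        have := denom_pos hγ0 (s+1); push_cast at this; intro h; rw [h] at this; exact lt_irrefl 0 this
      field_simp
      ring
    have hkey : α s * (1 - α (s + 1)) = α (s + 1) := by
      rw [hα]; push_cast; exact_mod_cast hr
    have hC : Polynomial.C (α s) * (1 - Polynomial.C (α (s+1))) = Polynomial.C (α (s+1)) := by
      have h := congrArg Polynomial.C hkey
      rw [map_mul, map_sub, map_one] at h
      exact h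
    rw [show szego α (s+2) = X * szego α (s+1) -
      Polynomial.C ((starRingEnd ℂ) (α (s+1))) *
        reflect (s+1) ((szego α (s+1)).map (starRingEnd ℂ)) from rfl]
    rw [ih, hconj]
    have hmap : ((X:ℂ[X]) ^ (s+1) - Polynomial.C (α s) * ∑ k ∈ range (s+1), (X:ℂ[X]) ^ k).map
        (starRingEnd ℂ) = X ^ (s+1) - Polynomial.C (α s) * ∑ k ∈ range (s+1), (X:ℂ[X]) ^ k := by
      simp [Polynomial.map_sub, Polynomial.map_mul, Polynomial.map_pow, Polynomial.map_sum, hconj]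
    rw [hmap]
    have hS : reflect (s+1) (∑ k ∈ range (s+1), (X:ℂ[X]) ^ k)
        = ∑ k ∈ range (s+1), (X:ℂ[X]) ^ (k+1) := by
      rw [reflect_sum']
      rw [show (∑ k ∈ range (s+1), reflect (s+1) ((X:ℂ[X])^k))
          = ∑ k ∈ range (s+1), (X:ℂ[X])^(s+1-k) from
        sum_congr rfl fun k hk => by
          rw [reflect_monomial, revAt_le (by simp at hk; omega : k ≤ s+1)]]
      rw [← Finset.sum_range_reflect (fun k => (X:ℂ[X])^(k+1)) (s+1)]
      apply sum_congr rfl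
      intro k hk
      simp only [mem_range] at hk
      congr 1
      omega
    have hrefl : reflect (s+1) ((X:ℂ[X]) ^ (s+1) - Polynomial.C (α s) * ∑ k ∈ range (s+1), (X:ℂ[X]) ^ k)
        = 1 - Polynomial.C (α s) * ∑ k ∈ range (s+1), (X:ℂ[X]) ^ (k+1) := by
      rw [sub_eq_add_neg, ← neg_mul, ← Polynomial.C_neg, reflect_add, reflect_C_mul,
        reflect_monomial, revAt_le (le_refl (s+1)), Nat.sub_self, pow_zero, hS,
        Polynomial.C_neg, neg_mul, ← sub_eq_add_neg]
    rw [hrefl]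
    have hXS : X * (∑ k ∈ range (s+1), (X:ℂ[X]) ^ k) = ∑ k ∈ range (s+1), (X:ℂ[X]) ^ (k+1) := by
      rw [Finset.mul_sum]; exact sum_congr rfl fun k _ => by ring
    rw [Finset.sum_range_succ' (fun k => (X:ℂ[X])^k) (s+1)]
    simp only [pow_zero]
    linear_combination (-(Polynomial.C (α s))) * hXS +
      (-(∑ k ∈ range (s+1), (X:ℂ[X])^(k+1))) * hC

lemma pBI_zero_aux (k : ℕ) :
    LaurentPolynomial.C ((starRingEnd ℂ) (0:ℂ)) * LaurentPolynomial.T (-(k:ℤ)) = 0 := by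
  simp

lemma pBI_add (f g : Polynomial ℂ) :
    polyBarInv (f + g) = polyBarInv f + polyBarInv g := by
  unfold polyBarInv
  refine Polynomial.sum_add_index f g _ (fun i => pBI_zero_aux i) ?_
  intro i b c
  simp [mul_add, add_mul]

lemma pBI_X_pow (k : ℕ) :
    polyBarInv ((X : Polynomial ℂ) ^ k) = LaurentPolynomial.T (-(k:ℤ)) := by
  unfold polyBarInv
  rw [X_pow_eq_monomial, Polynomial.sum_monomial_index _ _ (pBI_zero_aux k)]
  simp

lemma pBI_C_mul (a : ℂ) (f : Polynomial ℂ) :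
    polyBarInv (Polynomial.C a * f) = LaurentPolynomial.C ((starRingEnd ℂ) a) * polyBarInv f := by
  unfold polyBarInv
  rw [← Polynomial.smul_eq_C_mul, Polynomial.sum_smul_index _ _ _ (fun i => pBI_zero_aux i)]
  rw [Polynomial.sum_def, Polynomial.sum_def, Finset.mul_sum]
  apply sum_congr rfl
  intro k _
  rw [map_mul, map_mul, mul_assoc]

lemma pBI_sum (m : ℕ) (f : ℕ → Polynomial ℂ) :
    polyBarInv (∑ k ∈ range m, f k) = ∑ k ∈ range m, polyBarInv (f k) := by
  induction m with
  | zero => unfold polyBarInv; simp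
  | succ m ih => rw [sum_range_succ, pBI_add, ih, sum_range_succ]

lemma lBI_single (c : ℂ) (m : ℤ) :
    laurentBarInv (LaurentPolynomial.C c * LaurentPolynomial.T m) =
      LaurentPolynomial.C ((starRingEnd ℂ) c) * LaurentPolynomial.T (-m) := by
  unfold laurentBarInv
  rw [← single_eq_C_mul_T, AddMonoidAlgebra.coeff_single]
  by_cases hc : c = 0
  · simp [hc]
  · rw [Finsupp.sum_single_index (by simp)]

lemma lBI_T (m : ℤ) :
    laurentBarInv (LaurentPolynomial.T m) = LaurentPolynomial.T (-m) := by
  have := lBI_single 1 m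
  simpa using this

lemma lBI_add (f g : LaurentPolynomial ℂ) :
    laurentBarInv (f + g) = laurentBarInv f + laurentBarInv g := by
  unfold laurentBarInv
  rw [AddMonoidAlgebra.coeff_add]
  refine Finsupp.sum_add_index' (fun i => by simp) ?_
  intro i b c
  simp [mul_add, add_mul]

lemma lBI_sum (m : ℕ) (f : ℕ → LaurentPolynomial ℂ) :
    laurentBarInv (∑ k ∈ range m, f k) = ∑ k ∈ range m, laurentBarInv (f k) := by
  induction m with
  | zero => unfold laurentBarInv; simp
  | succ m ih => rw [sum_range_succ, lBI_add, ih, sum_range_succ]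

lemma hLC (L : LaurentPolynomial ℂ →ₗ[ℂ] ℂ) (c : ℂ) (x : LaurentPolynomial ℂ) :
    L (LaurentPolynomial.C c * x) = c * L x := by
  have : LaurentPolynomial.C c * x = c • x := by
    rw [Algebra.smul_def, LaurentPolynomial.algebraMap_apply]
    simp
  rw [this, map_smul, smul_eq_mul]

lemma lBI_zero : laurentBarInv 0 = 0 := by
  unfold laurentBarInv; simp

lemma lBI_neg (f : LaurentPolynomial ℂ) : laurentBarInv (-f) = - laurentBarInv f := by
  have h := lBI_add f (-f)
  rw [add_neg_cancel, lBI_zero] at h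
  exact (neg_eq_of_add_eq_zero_right h.symm).symm


lemma toLaurent_szego_succ (γ : ℝ) (hγ0 : 0 < γ) (α : ℕ → ℂ)
    (hα : α = fun n : ℕ => ((γ / (1 + n * γ) : ℝ) : ℂ)) (s : ℕ) :
    Polynomial.toLaurent (szego α (s+1)) =
      LaurentPolynomial.T ((s:ℤ)+1) -
        LaurentPolynomial.C (α s) * ∑ k ∈ range (s+1), LaurentPolynomial.T (k:ℤ) := by
  rw [szego_succ_eq γ hγ0 α hα s, map_sub, map_mul, map_sum, Polynomial.toLaurent_C]
  congr 1
  · rw [Polynomial.toLaurent_X_pow]; norm_cast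
  · congr 1
    exact sum_congr rfl fun k _ => Polynomial.toLaurent_X_pow k

lemma pBI_szego_succ (γ : ℝ) (hγ0 : 0 < γ) (α : ℕ → ℂ)
    (hα : α = fun n : ℕ => ((γ / (1 + n * γ) : ℝ) : ℂ)) (s : ℕ) :
    polyBarInv (szego α (s+1)) =
      LaurentPolynomial.T (-((s:ℤ)+1)) -
        LaurentPolynomial.C (α s) * ∑ k ∈ range (s+1), LaurentPolynomial.T (-(k:ℤ)) := by
  have hconj : ∀ m : ℕ, (starRingEnd ℂ) (α m) = α m := by
    intro m; rw [hα]; exact Complex.conj_ofReal _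
  rw [szego_succ_eq γ hγ0 α hα s, sub_eq_add_neg, ← neg_mul, ← Polynomial.C_neg, pBI_add,
    pBI_X_pow, pBI_C_mul, pBI_sum]
  rw [map_neg, hconj, map_neg, neg_mul, ← sub_eq_add_neg,
    sum_congr rfl fun k _ => pBI_X_pow k]
  norm_cast

lemma L_T (γ : ℝ) (hγ0 : 0 < γ) (hγ1 : γ < 1) (α : ℕ → ℂ)
    (hα : α = fun n : ℕ => ((γ / (1 + n * γ) : ℝ) : ℂ))
    (L : LaurentPolynomial ℂ →ₗ[ℂ] ℂ) (hL1 : L 1 = 1)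
    (hLphi : ∀ k : ℕ, 1 ≤ k → L (Polynomial.toLaurent (szego α k)) = 0)
    (hLbar : ∀ k : ℕ, 1 ≤ k → L (polyBarInv (szego α k)) = 0) :
    ∀ m : ℤ, L (LaurentPolynomial.T m) = if m = 0 then 1 else (γ : ℂ) := by
  have hstep : ∀ t : ℕ, ((γ / (1 + t * γ) : ℝ) : ℂ) * (1 + (t:ℂ) * (γ:ℂ)) = (γ:ℂ) := by
    intro t
    have h1 : 1 + (t:ℝ) * γ ≠ 0 := ne_of_gt (denom_pos hγ0 t)
    have : (γ / (1 + (t:ℝ) * γ)) * (1 + (t:ℝ) * γ) = γ := div_mul_cancel₀ γ h1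
    push_cast
    exact_mod_cast this
  have hsum : ∀ (t : ℕ) (g : ℕ → ℂ), (∀ k, k < t + 1 → g k = if k = 0 then 1 else (γ:ℂ)) →
      ∑ k ∈ range (t+1), g k = 1 + (t:ℂ) * (γ:ℂ) := by
    intro t g hg
    rw [Finset.sum_range_succ' g t, hg 0 (by omega)]
    have h1 : ∀ k ∈ range t, g (k+1) = (γ:ℂ) := fun k hk => by
      rw [hg (k+1) (by simp only [mem_range] at hk; omega)]
      simp
    rw [sum_congr rfl h1, sum_const, nsmul_eq_mul]
    rw [if_pos rfl, card_range]
    push_cast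
    ring
  have hpos : ∀ k : ℕ, L (LaurentPolynomial.T (k:ℤ)) = if (k:ℤ) = 0 then 1 else (γ:ℂ) := by
    intro k
    induction k using Nat.strong_induction_on with
    | _ k ih =>
      match k with
      | 0 => simp [LaurentPolynomial.T_zero, hL1]
      | t + 1 =>
        have h0 := hLphi (t+1) (by omega)
        rw [toLaurent_szego_succ γ hγ0 α hα t, map_sub, hLC, map_sum] at h0
        have hs : ∑ k ∈ range (t+1), L (LaurentPolynomial.T (k:ℤ)) = 1 + (t:ℂ) * (γ:ℂ) := by
          refine hsum t _ fun k hk => ?_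
          rw [ih k hk]
          by_cases h : k = 0 <;> simp [h]
        rw [hs] at h0
        rw [sub_eq_zero] at h0
        rw [show ((t:ℤ)+1) = (((t+1:ℕ)):ℤ) by push_cast; ring] at h0
        rw [h0, hα]
        simp only [if_neg (by omega : ¬((t+1:ℕ):ℤ) = 0)]
        exact hstep t
  have hneg : ∀ k : ℕ, L (LaurentPolynomial.T (-(k:ℤ))) = if (k:ℤ) = 0 then 1 else (γ:ℂ) := by
    intro k
    induction k using Nat.strong_induction_on with
    | _ k ih =>
      match k with
      | 0 => simp [LaurentPolynomial.T_zero, hL1]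
      | t + 1 =>
        have h0 := hLbar (t+1) (by omega)
        rw [pBI_szego_succ γ hγ0 α hα t, map_sub, hLC, map_sum] at h0
        have hs : ∑ k ∈ range (t+1), L (LaurentPolynomial.T (-(k:ℤ))) = 1 + (t:ℂ) * (γ:ℂ) := by
          refine hsum t _ fun k hk => ?_
          rw [ih k hk]
          by_cases h : k = 0 <;> simp [h]
        rw [hs] at h0
        rw [sub_eq_zero] at h0
        rw [show (-((t:ℤ)+1)) = (-((t+1:ℕ):ℤ)) by push_cast; ring] at h0
        rw [h0, hα]
        simp only [if_neg (by omega : ¬((t+1:ℕ):ℤ) = 0)]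
        exact hstep t
  intro m
  obtain ⟨k, rfl | rfl⟩ := Int.eq_nat_or_neg m
  · exact hpos k
  · rw [hneg k]
    by_cases h : (k:ℤ) = 0 <;> simp [h]
lemma toLaurent_szego_all (γ : ℝ) (hγ0 : 0 < γ) (α : ℕ → ℂ)
    (hα : α = fun n : ℕ => ((γ / (1 + n * γ) : ℝ) : ℂ)) (s : ℕ) :
    Polynomial.toLaurent (szego α s) =
      LaurentPolynomial.T (s:ℤ) -
        LaurentPolynomial.C (az α ((s:ℤ)-1)) * ∑ k ∈ range s, LaurentPolynomial.T (k:ℤ) := by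
  cases s with
  | zero => simp [szego, LaurentPolynomial.T_zero]
  | succ s =>
    rw [toLaurent_szego_succ γ hγ0 α hα s]
    have h1 : ((s+1:ℕ):ℤ) - 1 = (s:ℤ) := by push_cast; ring
    have h2 : ((s+1:ℕ):ℤ) = (s:ℤ) + 1 := by push_cast; ring
    rw [h1, h2]
    have h3 : az α (s:ℤ) = α s := by
      unfold az
      rw [if_pos (Int.natCast_nonneg s), Int.toNat_natCast]
    rw [h3]

lemma helperT (u v : ℤ) : LaurentPolynomial.T (u:ℤ) * LaurentPolynomial.T v
    = (LaurentPolynomial.T (u + v) : LaurentPolynomial ℂ) := (T_add u v).symm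

lemma helper1 (c : ℂ) (u : ℤ) (m : ℕ) (w : ℕ → ℤ) :
    LaurentPolynomial.T u * (LaurentPolynomial.C c * ∑ j ∈ range m, LaurentPolynomial.T (w j)) =
      LaurentPolynomial.C c * ∑ j ∈ range m, LaurentPolynomial.T (u + w j) := by
  simp only [Finset.mul_sum]
  exact sum_congr rfl fun j _ => by rw [T_add]; ring

lemma helper2 (c : ℂ) (v : ℤ) (m : ℕ) (w : ℕ → ℤ) :
    (LaurentPolynomial.C c * ∑ k ∈ range m, LaurentPolynomial.T (w k)) * LaurentPolynomial.T v =
      LaurentPolynomial.C c * ∑ k ∈ range m, LaurentPolynomial.T (w k + v) := by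
  simp only [Finset.mul_sum, Finset.sum_mul]
  exact sum_congr rfl fun k _ => by rw [T_add]; ring

lemma helper3 (c d : ℂ) (m m' : ℕ) (w w' : ℕ → ℤ) :
    (LaurentPolynomial.C c * ∑ k ∈ range m, LaurentPolynomial.T (w k)) *
      (LaurentPolynomial.C d * ∑ j ∈ range m', LaurentPolynomial.T (w' j)) =
      LaurentPolynomial.C (c * d) *
        ∑ k ∈ range m, ∑ j ∈ range m', LaurentPolynomial.T (w k + w' j) := by
  have h : (LaurentPolynomial.C c * ∑ k ∈ range m, LaurentPolynomial.T (w k)) *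
      (LaurentPolynomial.C d * ∑ j ∈ range m', LaurentPolynomial.T (w' j)) =
      (LaurentPolynomial.C c * LaurentPolynomial.C d) *
        ((∑ k ∈ range m, LaurentPolynomial.T (w k)) *
          (∑ j ∈ range m', LaurentPolynomial.T (w' j))) := by ring
  rw [h, Finset.sum_mul_sum, map_mul]
  congr 1
  refine sum_congr rfl fun k _ => sum_congr rfl fun j _ => (T_add _ _).symm

lemma Num_eq (γ : ℝ) (hγ0 : 0 < γ) (α : ℕ → ℂ)
    (hα : α = fun n : ℕ => ((γ / (1 + n * γ) : ℝ) : ℂ))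
    (L : LaurentPolynomial ℂ →ₗ[ℂ] ℂ) (n : ℤ) (r s : ℕ) (hr : 0 < r) :
    L (Polynomial.toLaurent (szego α s) *
        laurentBarInv (LaurentPolynomial.T n * Polynomial.toLaurent (szego α r)))
    = L (LaurentPolynomial.T ((s:ℤ) - (n + r)))
      - α (r-1) * ∑ j ∈ range r, L (LaurentPolynomial.T ((s:ℤ) - (n + j)))
      - az α ((s:ℤ)-1) * ∑ k ∈ range s, L (LaurentPolynomial.T ((k:ℤ) - (n + r)))
      + az α ((s:ℤ)-1) * α (r-1) *
          ∑ k ∈ range s, ∑ j ∈ range r, L (LaurentPolynomial.T ((k:ℤ) - (n + j))) := by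
  obtain ⟨r', rfl⟩ : ∃ r', r = r' + 1 := ⟨r - 1, (Nat.succ_pred_eq_of_pos hr).symm⟩
  have hconj : ∀ m : ℕ, (starRingEnd ℂ) (α m) = α m := by
    intro m; rw [hα]; exact Complex.conj_ofReal _
  set a := az α ((s:ℤ)-1) with ha
  have hb : α (r' + 1 - 1) = α r' := by norm_num
  have hQ : LaurentPolynomial.T n * Polynomial.toLaurent (szego α (r'+1)) =
      LaurentPolynomial.T (n + ((r'+1:ℕ):ℤ)) -
        LaurentPolynomial.C (α r') * ∑ j ∈ range (r'+1), LaurentPolynomial.T (n + (j:ℤ)) := by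
    rw [toLaurent_szego_succ γ hγ0 α hα r', mul_sub]
    rw [helper1 (α r') n (r'+1) (fun j => (j:ℤ)), helperT]
    norm_cast
  have hQbar : laurentBarInv (LaurentPolynomial.T n * Polynomial.toLaurent (szego α (r'+1))) =
      LaurentPolynomial.T (-(n + ((r'+1:ℕ):ℤ))) -
        LaurentPolynomial.C (α r') * ∑ j ∈ range (r'+1), LaurentPolynomial.T (-(n + (j:ℤ))) := by
    rw [hQ, sub_eq_add_neg, lBI_add, lBI_T, lBI_neg, Finset.mul_sum, lBI_sum]
    simp only [lBI_single, hconj]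
    rw [← Finset.mul_sum, ← sub_eq_add_neg]
  rw [toLaurent_szego_all γ hγ0 α hα s, hQbar, ← ha]
  have hexp : (LaurentPolynomial.T (s:ℤ) -
        LaurentPolynomial.C a * ∑ k ∈ range s, LaurentPolynomial.T (k:ℤ)) *
      (LaurentPolynomial.T (-(n + ((r'+1:ℕ):ℤ))) -
        LaurentPolynomial.C (α r') * ∑ j ∈ range (r'+1), LaurentPolynomial.T (-(n + (j:ℤ)))) =
      LaurentPolynomial.T ((s:ℤ) + -(n + ((r'+1:ℕ):ℤ)))
      - LaurentPolynomial.C (α r') * ∑ j ∈ range (r'+1), LaurentPolynomial.T ((s:ℤ) + -(n + (j:ℤ)))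
      - LaurentPolynomial.C a * ∑ k ∈ range s, LaurentPolynomial.T ((k:ℤ) + -(n + ((r'+1:ℕ):ℤ)))
      + LaurentPolynomial.C (a * α r') *
          ∑ k ∈ range s, ∑ j ∈ range (r'+1), LaurentPolynomial.T ((k:ℤ) + -(n + (j:ℤ))) := by
    have e1 := helperT (s:ℤ) (-(n + ((r'+1:ℕ):ℤ)))
    have e2 := helper1 (α r') ((s:ℤ)) (r'+1) (fun j => -(n + (j:ℤ)))
    have e3 := helper2 a (-(n + ((r'+1:ℕ):ℤ))) s (fun k => (k:ℤ))
    have e4 := helper3 a (α r') s (r'+1) (fun k => (k:ℤ)) (fun j => -(n + (j:ℤ)))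
    rw [mul_comm (LaurentPolynomial.T (s:ℤ))] at e2
    linear_combination e1 + (-1 : LaurentPolynomial ℂ) * e2 + (-1 : LaurentPolynomial ℂ) * e3 + e4
  rw [hexp]
  simp only [← sub_eq_add_neg]
  simp only [map_add, map_sub, hLC, map_sum]
  rw [hb]
lemma sum_if_eq (m : ℕ) (t : ℤ) (c : ℂ) :
    ∑ j ∈ range m, (if (j:ℤ) = t then (1:ℂ) else c) =
      (m:ℂ) * c + (if 0 ≤ t ∧ t < (m:ℤ) then 1 - c else 0) := by
  by_cases h : 0 ≤ t ∧ t < (m:ℤ)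
  · rw [if_pos h]
    have ht : t.toNat < m := by omega
    have e : ∀ j ∈ range m, (if (j:ℤ) = t then (1:ℂ) else c) =
        c + (if j = t.toNat then 1 - c else 0) := by
      intro j _
      by_cases hjt : j = t.toNat
      · rw [if_pos (by omega), if_pos hjt]; ring
      · rw [if_neg (by omega), if_neg hjt]; ring
    rw [sum_congr rfl e, Finset.sum_add_distrib, sum_const, card_range, nsmul_eq_mul]
    congr 1
    rw [Finset.sum_ite_eq' (range m) t.toNat (fun _ => (1:ℂ) - c)]
    exact if_pos (mem_range.mpr ht)
  · rw [if_neg h, add_zero]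
    have e : ∀ j ∈ range m, (if (j:ℤ) = t then (1:ℂ) else c) = c := by
      intro j hj
      rw [if_neg]
      simp only [mem_range] at hj
      omega
    rw [sum_congr rfl e, sum_const, card_range, nsmul_eq_mul]

lemma sum_indicator (s : ℕ) (x : ℂ) (P : ℕ → Prop) [DecidablePred P] :
    ∑ k ∈ range s, (if P k then x else 0) = (((range s).filter P).card : ℂ) * x := by
  rw [← Finset.sum_filter, sum_const, nsmul_eq_mul]

lemma dpos' {γ : ℝ} (hγ0 : 0 < γ) (hγ1 : γ < 1) (s : ℕ) : 0 < 1 + ((s:ℝ)-1)*γ := by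
  have h := Nat.cast_nonneg (α := ℝ) s
  nlinarith

lemma Dprod {γ : ℝ} (hγ0 : 0 < γ) (hγ1 : γ < 1) (s : ℕ) :
    ∏ j ∈ range s, (1 - (γ/(1+(j:ℝ)*γ))^2) = (1-γ)*(1+(s:ℝ)*γ)/(1+((s:ℝ)-1)*γ) := by
  induction s with
  | zero =>
    have h : (1:ℝ) + (((0:ℕ):ℝ) - 1)*γ = 1 - γ := by push_cast; ring
    rw [prod_range_zero, h]
    have : (1:ℝ) - γ ≠ 0 := by linarith
    push_cast
    field_simp
    ring
  | succ s ih =>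
    rw [prod_range_succ, ih]
    have h1 : (1:ℝ) + (s:ℝ)*γ ≠ 0 := ne_of_gt (denom_pos hγ0 s)
    have h2 : (1:ℝ) + ((s:ℝ)-1)*γ ≠ 0 := ne_of_gt (dpos' hγ0 hγ1 s)
    have h3 : (1:ℝ) + (((s+1:ℕ):ℝ)-1)*γ ≠ 0 := ne_of_gt (dpos' hγ0 hγ1 (s+1))
    push_cast at h3 ⊢
    have h2' : 1 + γ*((s:ℝ)-1) ≠ 0 := by rwa [mul_comm]
    have h3' : 1 + γ*((s:ℝ)+1-1) ≠ 0 := by rwa [mul_comm]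
    field_simp
    ring

/-- single inserted mass point, generalized moments: with
`α_n = γ/(1+nγ)`, `γ ∈ (0,1)`, and `r > 0`, the generalized moments `μ_{n,r,s}` are
given by the stated three-case formula. -/
theorem single_mass_point_genMom (γ : ℝ) (hγ0 : 0 < γ) (hγ1 : γ < 1) (α : ℕ → ℂ)
    (hαdef : α = fun n : ℕ => ((γ / (1 + n * γ) : ℝ) : ℂ))
    (L : LaurentPolynomial ℂ →ₗ[ℂ] ℂ) (hL1 : L 1 = 1)
    (hLphi : ∀ k : ℕ, 1 ≤ k → L (Polynomial.toLaurent (szego α k)) = 0)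
    (hLbar : ∀ k : ℕ, 1 ≤ k → L (polyBarInv (szego α k)) = 0) :
    ∀ n r s : ℕ, 0 < r →
      (n + r ≤ s → genMom L α n r s = if n + r = s then 1 else 0) ∧
      ((n : ℤ) - 1 < (s : ℤ) ∧ (s : ℤ) < (n : ℤ) + (r : ℤ) →
        genMom L α n r s =
          ((-(n * γ ^ 2) / ((1 + ((r : ℝ) - 1) * γ) * (1 + s * γ)) : ℝ) : ℂ)) ∧
      ((s : ℤ) ≤ (n : ℤ) - 1 →
        genMom L α n r s =
          (((1 - γ) * γ / ((1 + ((r : ℝ) - 1) * γ) * (1 + s * γ)) : ℝ) : ℂ)) := by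
  intro n r s hr
  have LT := L_T γ hγ0 hγ1 α hαdef L hL1 hLphi hLbar
  have hNum := Num_eq γ hγ0 α hαdef L (n:ℤ) r s hr
  set P : ℕ → Prop := fun k => 0 ≤ (k:ℤ)-(n:ℤ) ∧ (k:ℤ)-(n:ℤ) < (r:ℤ) with hP
  have h1 : ∑ j ∈ range r, L (LaurentPolynomial.T ((s:ℤ) - ((n:ℤ) + j))) =
      (r:ℂ) * γ + (if 0 ≤ (s:ℤ)-(n:ℤ) ∧ (s:ℤ)-(n:ℤ) < (r:ℤ) then 1-(γ:ℂ) else 0) := by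
    have e : ∀ j ∈ range r, L (LaurentPolynomial.T ((s:ℤ) - ((n:ℤ) + j))) =
        (if (j:ℤ) = (s:ℤ)-(n:ℤ) then (1:ℂ) else γ) := by
      intro j _
      rw [LT]
      exact if_congr (by omega) rfl rfl
    rw [sum_congr rfl e, sum_if_eq]
  have h2 : ∑ k ∈ range s, L (LaurentPolynomial.T ((k:ℤ) - ((n:ℤ) + r))) =
      (s:ℂ) * γ + (if 0 ≤ (n:ℤ)+(r:ℤ) ∧ (n:ℤ)+(r:ℤ) < (s:ℤ) then 1-(γ:ℂ) else 0) := by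
    have e : ∀ k ∈ range s, L (LaurentPolynomial.T ((k:ℤ) - ((n:ℤ) + r))) =
        (if (k:ℤ) = (n:ℤ)+(r:ℤ) then (1:ℂ) else γ) := by
      intro k _
      rw [LT]
      exact if_congr (by omega) rfl rfl
    rw [sum_congr rfl e, sum_if_eq]
  have h3 : ∑ k ∈ range s, ∑ j ∈ range r, L (LaurentPolynomial.T ((k:ℤ) - ((n:ℤ) + j))) =
      (s:ℂ) * ((r:ℂ) * γ) + (((range s).filter P).card : ℂ) * (1-(γ:ℂ)) := by
    have e : ∀ k ∈ range s, ∑ j ∈ range r, L (LaurentPolynomial.T ((k:ℤ) - ((n:ℤ) + j))) =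
        (r:ℂ) * γ + (if P k then 1-(γ:ℂ) else 0) := by
      intro k _
      have e2 : ∀ j ∈ range r, L (LaurentPolynomial.T ((k:ℤ) - ((n:ℤ) + j))) =
          (if (j:ℤ) = (k:ℤ)-(n:ℤ) then (1:ℂ) else γ) := by
        intro j _
        rw [LT]
        exact if_congr (by omega) rfl rfl
      rw [sum_congr rfl e2, sum_if_eq]
    rw [sum_congr rfl e, Finset.sum_add_distrib, sum_const, card_range, nsmul_eq_mul,
      sum_indicator]
  rw [h1, h2, h3, LT ((s:ℤ) - ((n:ℤ) + (r:ℤ)))] at hNum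
  -- denominator
  have hDpos : (0:ℝ) < (1-γ)*(1+(s:ℝ)*γ)/(1+((s:ℝ)-1)*γ) := by
    have := denom_pos hγ0 s
    have := dpos' hγ0 hγ1 s
    have h1γ : (0:ℝ) < 1 - γ := by linarith
    positivity
  have hD : ∏ j ∈ Finset.range s, ((1 - Complex.normSq (α j) : ℝ) : ℂ) =
      (((1-γ)*(1+(s:ℝ)*γ)/(1+((s:ℝ)-1)*γ) : ℝ) : ℂ) := by
    rw [← Dprod hγ0 hγ1 s]
    rw [Complex.ofReal_prod]
    refine prod_congr rfl fun j _ => ?_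
    rw [hαdef]
    congr 1
    rw [Complex.normSq_ofReal]
    ring
  have hDne : (((1-γ)*(1+(s:ℝ)*γ)/(1+((s:ℝ)-1)*γ) : ℝ) : ℂ) ≠ 0 :=
    Complex.ofReal_ne_zero.mpr (ne_of_gt hDpos)
  -- values of the Verblunsky coefficients
  have hb : α (r-1) = ((γ/(1+((r:ℝ)-1)*γ) : ℝ) : ℂ) := by
    have hb0 : α (r-1) = ((γ/(1+((r-1:ℕ):ℝ)*γ) : ℝ) : ℂ) := by rw [hαdef]
    rw [hb0]
    congr 2
    rw [Nat.cast_sub (by omega : 1 ≤ r)]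
    norm_num
  have haz : 1 ≤ s → az α ((s:ℤ)-1) = ((γ/(1+((s:ℝ)-1)*γ) : ℝ) : ℂ) := by
    intro hs
    unfold az
    rw [if_pos (by omega : (0:ℤ) ≤ (s:ℤ)-1)]
    have h4 : ((s:ℤ)-1).toNat = s - 1 := by omega
    rw [h4]
    have hb0 : α (s-1) = ((γ/(1+((s-1:ℕ):ℝ)*γ) : ℝ) : ℂ) := by rw [hαdef]
    rw [hb0]
    congr 2
    rw [Nat.cast_sub hs]
    norm_num
  -- nonzero denominators in ℂ
  have c1 : ((1:ℂ) + ((s:ℂ)-1)*(γ:ℂ)) ≠ 0 := by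
    have h := ne_of_gt (dpos' hγ0 hγ1 s)
    have : ((1 + ((s:ℝ)-1)*γ : ℝ) : ℂ) ≠ 0 := Complex.ofReal_ne_zero.mpr h
    push_cast at this
    exact this
  have c2 : ((1:ℂ) + ((r:ℂ)-1)*(γ:ℂ)) ≠ 0 := by
    have h := ne_of_gt (dpos' hγ0 hγ1 r)
    have : ((1 + ((r:ℝ)-1)*γ : ℝ) : ℂ) ≠ 0 := Complex.ofReal_ne_zero.mpr h
    push_cast at this
    exact this
  have c3 : ((1:ℂ) + (s:ℂ)*(γ:ℂ)) ≠ 0 := by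
    have h := ne_of_gt (denom_pos hγ0 s)
    have : ((1 + (s:ℝ)*γ : ℝ) : ℂ) ≠ 0 := Complex.ofReal_ne_zero.mpr h
    push_cast at this
    exact this
  have c5 : ((1:ℂ) - (γ:ℂ)) ≠ 0 := by
    have : ((1 - γ : ℝ) : ℂ) ≠ 0 := Complex.ofReal_ne_zero.mpr (by linarith)
    push_cast at this
    exact this
  have c1' : (1:ℂ) + (γ:ℂ)*((s:ℂ)-1) ≠ 0 := by rwa [mul_comm]
  have c2' : (1:ℂ) + (γ:ℂ)*((r:ℂ)-1) ≠ 0 := by rwa [mul_comm]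
  have c3' : (1:ℂ) + (γ:ℂ)*(s:ℂ) ≠ 0 := by rwa [mul_comm]
  refine ⟨?_, ?_, ?_⟩
  · -- case A : n + r ≤ s
    intro hA
    have hcard : ((range s).filter P).card = r := by
      have : (range s).filter P = Finset.Ico n (n+r) := by
        ext k
        simp only [hP, mem_filter, mem_range, Finset.mem_Ico]
        omega
      rw [this, Nat.card_Ico]
      omega
    rw [hcard] at hNum
    rw [if_neg (by omega : ¬(0 ≤ (s:ℤ)-(n:ℤ) ∧ (s:ℤ)-(n:ℤ) < (r:ℤ)))] at hNum
    by_cases heq : n + r = s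
    · rw [if_pos (by omega : (s:ℤ) - ((n:ℤ)+(r:ℤ)) = 0),
        if_neg (by omega : ¬(0 ≤ (n:ℤ)+(r:ℤ) ∧ (n:ℤ)+(r:ℤ) < (s:ℤ)))] at hNum
      rw [if_pos heq]
      unfold genMom
      rw [hNum, hD, div_eq_one_iff_eq hDne]
      rcases Nat.eq_zero_or_pos s with hs | hs
      · omega
      · rw [hb, haz hs]
        push_cast
        field_simp
        ring
    · rw [if_neg (by omega : ¬(s:ℤ) - ((n:ℤ)+(r:ℤ)) = 0),
        if_pos (by omega : (0 ≤ (n:ℤ)+(r:ℤ) ∧ (n:ℤ)+(r:ℤ) < (s:ℤ)))] at hNum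
      rw [if_neg heq]
      unfold genMom
      rw [hNum, hD, _root_.div_eq_zero_iff]
      left
      have hs : 1 ≤ s := by omega
      rw [hb, haz hs]
      push_cast
      field_simp
      ring
  · -- case B : n ≤ s < n + r
    rintro ⟨hB1, hB2⟩
    have hns : n ≤ s := by omega
    have hcard : ((range s).filter P).card = s - n := by
      have : (range s).filter P = Finset.Ico n s := by
        ext k
        simp only [hP, mem_filter, mem_range, Finset.mem_Ico]
        omega
      rw [this, Nat.card_Ico]
    rw [if_neg (by omega : ¬(s:ℤ) - ((n:ℤ)+(r:ℤ)) = 0),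
      if_pos (by omega : (0 ≤ (s:ℤ)-(n:ℤ) ∧ (s:ℤ)-(n:ℤ) < (r:ℤ))),
      if_neg (by omega : ¬(0 ≤ (n:ℤ)+(r:ℤ) ∧ (n:ℤ)+(r:ℤ) < (s:ℤ)))] at hNum
    unfold genMom
    rcases Nat.eq_zero_or_pos s with hs | hs
    · subst hs
      have hn0 : n = 0 := by omega
      subst hn0
      simp only [range_zero, filter_empty, card_empty] at hNum
      rw [prod_range_zero, div_one, hNum, hb]
      push_cast
      field_simp
      ring
    · rw [hcard] at hNum
      rw [hNum, hD, div_eq_iff hDne, hb, haz hs]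
      push_cast [Nat.cast_sub hns]
      field_simp
      ring
  · -- case C : s ≤ n - 1
    intro hC
    have hcard : ((range s).filter P).card = 0 := by
      rw [Finset.card_eq_zero]
      ext k
      simp only [hP, mem_filter, mem_range, Finset.notMem_empty, iff_false]
      omega
    rw [hcard] at hNum
    rw [if_neg (by omega : ¬(s:ℤ) - ((n:ℤ)+(r:ℤ)) = 0),
      if_neg (by omega : ¬(0 ≤ (s:ℤ)-(n:ℤ) ∧ (s:ℤ)-(n:ℤ) < (r:ℤ))),
      if_neg (by omega : ¬(0 ≤ (n:ℤ)+(r:ℤ) ∧ (n:ℤ)+(r:ℤ) < (s:ℤ)))] at hNum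
    unfold genMom
    rcases Nat.eq_zero_or_pos s with hs | hs
    · subst hs
      rw [prod_range_zero, div_one, hNum, hb]
      push_cast
      field_simp
      ring
    · rw [hNum, hD, div_eq_iff hDne, hb, haz hs]
      push_cast
      field_simp
      ring
end
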